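/- (ABC theorem) Let G be an n×n quasidefinite matrix with factorization G = S₁⁻¹ H S₂^{-†}, and define φ₁(z) = S₁ χ(z), φ₂(z) = S₂ χ(z) for the vector χ(z) of the first n CMV basis functions. Then for all z₁, z₂ ∈ ℂ*: ∑_{k=0}^{n-1} \overline{φ_{2,k}(z₁)} H_k^{-1} φ_{1,k}(z₂) = χ(z₁)^† G^{-1} χ(z₂). -/
import Mathlib


open Matrix

/-- The CMV ordered basis of Laurent polynomials as functions on ℂ*. -/
noncomputable def cmv (l : ℕ) : ℂˣ → ℂ := fun z =>
  if l % 2 = 0 then (z : ℂ) ^ ((l / 2 : ℕ) : ℤ)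
  else (z : ℂ) ^ (-(((l / 2 : ℕ) : ℤ)) - 1)

lemma unitri_isUnit_det {n : ℕ} (S : Matrix (Fin n) (Fin n) ℂ)
    (hlo : ∀ i j, i < j → S i j = 0) (hdiag : ∀ i, S i i = 1) : IsUnit S.det := by
  have : S.det = ∏ i, S i i := by
    apply Matrix.det_of_lowerTriangular
    intro i j hij
    exact hlo i j hij
  rw [this]
  simp [hdiag]

/-- ABC theorem: for a quasidefinite `G = S₁⁻¹ H S₂^{-†}` and `φ₁ = S₁ χ`, `φ₂ = S₂ χ`,
the Christoffel–Darboux kernel `∑_k conj(φ_{2,k}(z₁)) H_k⁻¹ φ_{1,k}(z₂)` equals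
`χ(z₁)† G⁻¹ χ(z₂)`. -/
theorem abc_theorem (n : ℕ) (G S₁ S₂ : Matrix (Fin n) (Fin n) ℂ) (h : Fin n → ℂ)
    (hquasi : ∀ (l : ℕ) (hl : l ≤ n),
      (Matrix.of fun i j : Fin l => G (Fin.castLE hl i) (Fin.castLE hl j)).det ≠ 0)
    (hS₁lo : ∀ i j, i < j → S₁ i j = 0) (hS₁diag : ∀ i, S₁ i i = 1)
    (hS₂lo : ∀ i j, i < j → S₂ i j = 0) (hS₂diag : ∀ i, S₂ i i = 1)
    (hh : ∀ k, h k ≠ 0)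
    (hG : G = S₁⁻¹ * Matrix.diagonal h * (S₂ᴴ)⁻¹) :
    ∀ z₁ z₂ : ℂˣ,
      ∑ k : Fin n,
          (starRingEnd ℂ) (∑ r, S₂ k r * cmv r z₁) * (h k)⁻¹ * (∑ r, S₁ k r * cmv r z₂) =
        ∑ i : Fin n, ∑ j : Fin n,
          (starRingEnd ℂ) (cmv i z₁) * G⁻¹ i j * cmv j z₂ := by
  intro z₁ z₂
  have hd1 : IsUnit S₁.det := unitri_isUnit_det S₁ hS₁lo hS₁diag
  have hd2 : IsUnit S₂.det := unitri_isUnit_det S₂ hS₂lo hS₂diag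
  have hd2' : IsUnit (S₂ᴴ).det := by
    rwa [Matrix.det_conjTranspose, isUnit_iff_ne_zero, ne_eq, star_eq_zero,
      ← ne_eq, ← isUnit_iff_ne_zero]
  have hdD : IsUnit (Matrix.diagonal h).det := by
    rw [Matrix.det_diagonal]
    exact isUnit_iff_ne_zero.mpr (Finset.prod_ne_zero_iff.mpr fun k _ => hh k)
  have hDinv : (Matrix.diagonal h)⁻¹ = Matrix.diagonal (fun k => (h k)⁻¹) := by
    apply Matrix.inv_eq_right_inv
    rw [Matrix.diagonal_mul_diagonal]
    convert Matrix.diagonal_one with k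
    exact mul_inv_cancel₀ (hh k)
  have hGinv : G⁻¹ = S₂ᴴ * (Matrix.diagonal h)⁻¹ * S₁ := by
    apply Matrix.inv_eq_right_inv
    rw [hG]
    calc S₁⁻¹ * Matrix.diagonal h * (S₂ᴴ)⁻¹ * (S₂ᴴ * (Matrix.diagonal h)⁻¹ * S₁)
        = S₁⁻¹ * (Matrix.diagonal h * (((S₂ᴴ)⁻¹ * S₂ᴴ) * ((Matrix.diagonal h)⁻¹ * S₁))) := by
          simp only [Matrix.mul_assoc]
      _ = 1 := by
          rw [Matrix.nonsing_inv_mul _ hd2', Matrix.one_mul, ← Matrix.mul_assoc (Matrix.diagonal h),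
            Matrix.mul_nonsing_inv _ hdD, Matrix.one_mul, Matrix.nonsing_inv_mul _ hd1]
  have key : ∀ i j, G⁻¹ i j = ∑ k, (starRingEnd ℂ) (S₂ k i) * (h k)⁻¹ * S₁ k j := by
    intro i j
    rw [hGinv, hDinv]
    simp [Matrix.mul_apply, Matrix.diagonal_apply, Matrix.conjTranspose_apply,
      Finset.sum_mul, mul_ite, ite_mul, mul_zero, zero_mul, RCLike.star_def]
  simp only [key]
  have step1 : ∀ i j : Fin n, (starRingEnd ℂ) (cmv i z₁) *
        (∑ k, (starRingEnd ℂ) (S₂ k i) * (h k)⁻¹ * S₁ k j) * cmv j z₂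
      = ∑ k, (starRingEnd ℂ) (cmv i z₁) *
        ((starRingEnd ℂ) (S₂ k i) * (h k)⁻¹ * S₁ k j) * cmv j z₂ := by
    intro i j
    rw [Finset.mul_sum, Finset.sum_mul]
  simp only [step1]
  rw [show (∑ i : Fin n, ∑ j : Fin n, ∑ k : Fin n, (starRingEnd ℂ) (cmv i z₁) *
        ((starRingEnd ℂ) (S₂ k i) * (h k)⁻¹ * S₁ k j) * cmv j z₂)
      = ∑ k : Fin n, ∑ i : Fin n, ∑ j : Fin n, (starRingEnd ℂ) (cmv i z₁) *
        ((starRingEnd ℂ) (S₂ k i) * (h k)⁻¹ * S₁ k j) * cmv j z₂ from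
    (Finset.sum_congr rfl fun i _ => Finset.sum_comm).trans Finset.sum_comm]
  refine Finset.sum_congr rfl fun k _ => ?_
  rw [map_sum, Finset.sum_mul, Finset.sum_mul]
  refine Finset.sum_congr rfl fun i _ => ?_
  rw [Finset.mul_sum]
  refine Finset.sum_congr rfl fun j _ => ?_
  rw [_root_.map_mul]
  ring
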